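/- Let V_1, …, V_r be entanglement-breaking spaces with V_j ⊆ ℂ^{m_j} ⊗ ℂ^{n_j} for j = 1,…,r. Define V_1 ⊠ ⋯ ⊠ V_r ⊆ ℂ^{m_1⋯m_r} ⊗ ℂ^{n_1⋯n_r} as the span of the vectors ((a_1,…,a_r),(b_1,…,b_r)) ↦ ∏_{j=1}^r v_j(a_j,b_j) with v_j ∈ V_j (the tensor product of the V_j with all A-systems grouped together and all B-systems grouped together). Then V_1 ⊠ ⋯ ⊠ V_r is an entanglement-breaking space. -/

import Mathlib

open scoped BigOperators ComplexOrder
open Kronecker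

noncomputable section

/-- The `j`-th standard basis vector of `ℂ^q` (zero if `j ≥ q`). -/
def ee (q : ℕ) (j : ℕ) : Fin q → ℂ := fun b => if (b : ℕ) = j then 1 else 0

/-- Tensor (Kronecker) product of two vectors. -/
def tens {A B : Type*} (x : A → ℂ) (y : B → ℂ) : A × B → ℂ := fun p => x p.1 * y p.2

/-- A matrix on `ℂ^A ⊗ ℂ^B` is separable if it is a finite sum of Kronecker products of
rank-one positive semidefinite matrices. -/
def IsSep {A B : Type*} (ρ : Matrix (A × B) (A × B) ℂ) : Prop :=
  ∃ (T : ℕ) (x : Fin T → A → ℂ) (y : Fin T → B → ℂ),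
    ρ = ∑ t : Fin T, Matrix.of (fun p q : A × B =>
      (x t p.1 * (starRingEnd ℂ) (x t q.1)) * (y t p.2 * (starRingEnd ℂ) (y t q.2)))

/-- Partial trace over the middle (B) system of the rank-one projection `|Ψ⟩⟨Ψ|`. -/
def TrB {A B : Type*} [Fintype B] {k : ℕ} (Ψ : A × B × Fin k → ℂ) :
    Matrix (A × Fin k) (A × Fin k) ℂ :=
  Matrix.of fun p q => ∑ b : B, Ψ (p.1, b, p.2) * (starRingEnd ℂ) (Ψ (q.1, b, q.2))

/-- A subspace `V ⊆ ℂ^A ⊗ ℂ^B` is entanglement breaking if for every ancilla dimension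
`k ≥ 1` and every `Ψ` whose slices all lie in `V`, the matrix `Tr_B |Ψ⟩⟨Ψ|` is separable. -/
def IsEBSpace {A B : Type*} [Fintype B] (V : Submodule ℂ (A × B → ℂ)) : Prop :=
  ∀ (k : ℕ), 1 ≤ k → ∀ Ψ : A × B × Fin k → ℂ,
    (∀ ℓ : Fin k, (fun ab : A × B => Ψ (ab.1, ab.2, ℓ)) ∈ V) → IsSep (TrB Ψ)

/-- Partial transpose on the B system. -/
def PT {A B : Type*} (ρ : Matrix (A × B) (A × B) ℂ) : Matrix (A × B) (A × B) ℂ :=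
  Matrix.of fun p q => ρ (p.1, q.2) (q.1, p.2)

/-- Partial trace over the B system of a matrix. -/
def trBmat {A B : Type*} [Fintype B] (ρ : Matrix (A × B) (A × B) ℂ) : Matrix A A ℂ :=
  Matrix.of fun a a' => ∑ b : B, ρ (a, b) (a', b)

/-- Partial trace over the A system of a matrix. -/
def trAmat {A B : Type*} [Fintype A] (ρ : Matrix (A × B) (A × B) ℂ) : Matrix B B ℂ :=
  Matrix.of fun b b' => ∑ a : A, ρ (a, b) (a, b')
lemma proj_exists {ι : Type*} [Fintype ι] [DecidableEq ι] (S : Submodule ℂ (ι → ℂ)) :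
    ∃ M : Matrix ι ι ℂ, (∀ v ∈ S, M.mulVec v = v) ∧ (∀ w, M.mulVec w ∈ S) := by
  obtain ⟨q, hq⟩ := Submodule.exists_isCompl S
  set f : (ι → ℂ) →ₗ[ℂ] (ι → ℂ) := S.subtype.comp (S.linearProjOfIsCompl q hq) with hf
  have key : ∀ w, (LinearMap.toMatrix' f).mulVec w = f w := by
    intro w
    rw [← Matrix.toLin'_apply, Matrix.toLin'_toMatrix']
  refine ⟨LinearMap.toMatrix' f, ?_, ?_⟩
  · intro v hv
    rw [key]
    have : f v = ↑(S.projectionOnto q hq ((⟨v, hv⟩ : S) : ι → ℂ)) := rfl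
    rw [this, Submodule.projectionOnto_apply_left hq]
  · intro w
    rw [key]
    exact (S.linearProjOfIsCompl q hq w).2

lemma eb_binary {A₁ B₁ A₂ B₂ : Type*} [Fintype A₁] [Fintype B₁] [Fintype A₂] [Fintype B₂]
    (V : Submodule ℂ (A₁ × B₁ → ℂ)) (W : Submodule ℂ (A₂ × B₂ → ℂ))
    (hV : IsEBSpace V) (hW : IsEBSpace W) :
    IsEBSpace (Submodule.span ℂ
      {u : (A₁ × A₂) × (B₁ × B₂) → ℂ | ∃ v ∈ V, ∃ w ∈ W,
        u = fun p => v (p.1.1, p.2.1) * w (p.1.2, p.2.2)}) := by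
  classical
  intro k hk Ψ hΨ
  by_cases hA : IsEmpty (A₁ × A₂)
  · refine ⟨0, Fin.elim0, Fin.elim0, ?_⟩
    ext ⟨a, ℓ⟩ q
    exact isEmptyElim a
  by_cases hB : IsEmpty (B₁ × B₂)
  · refine ⟨0, Fin.elim0, Fin.elim0, ?_⟩
    haveI := hB
    ext ⟨a, ℓ⟩ ⟨a', ℓ'⟩
    simp [TrB, Matrix.sum_apply]
  rw [not_isEmpty_iff] at hA hB
  obtain ⟨⟨a1e, a2e⟩⟩ := hA
  obtain ⟨⟨b1e, b2e⟩⟩ := hB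
  haveI : Nonempty A₂ := ⟨a2e⟩
  haveI : Nonempty B₂ := ⟨b2e⟩
  haveI : Nonempty (Fin k) := ⟨⟨0, hk⟩⟩
  -- partial evaluation memberships
  have hVmem : ∀ (a₂ : A₂) (b₂ : B₂) (ℓ : Fin k),
      (fun ab : A₁ × B₁ => Ψ ((ab.1, a₂), (ab.2, b₂), ℓ)) ∈ V := by
    intro a₂ b₂ ℓ
    have hle : Submodule.span ℂ
        {u : (A₁ × A₂) × (B₁ × B₂) → ℂ | ∃ v ∈ V, ∃ w ∈ W,
          u = fun p => v (p.1.1, p.2.1) * w (p.1.2, p.2.2)} ≤ V.comap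
        (LinearMap.funLeft ℂ ℂ (fun ab : A₁ × B₁ => ((ab.1, a₂), (ab.2, b₂)))) := by
      rw [Submodule.span_le]
      rintro _ ⟨v, hv, w, hw, rfl⟩
      simp only [Set.mem_preimage, SetLike.mem_coe, Submodule.mem_comap]
      have heq : (LinearMap.funLeft ℂ ℂ (fun ab : A₁ × B₁ => ((ab.1, a₂), (ab.2, b₂))))
          (fun p : (A₁ × A₂) × (B₁ × B₂) => v (p.1.1, p.2.1) * w (p.1.2, p.2.2))
          = w (a₂, b₂) • v := by
        funext ⟨c1, c2⟩
        simp only [LinearMap.funLeft_apply, Pi.smul_apply, smul_eq_mul]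
        try ring
      rw [heq]
      exact V.smul_mem _ hv
    exact hle (hΨ ℓ)
  have hWmem : ∀ (a₁ : A₁) (b₁ : B₁) (ℓ : Fin k),
      (fun ab : A₂ × B₂ => Ψ ((a₁, ab.1), (b₁, ab.2), ℓ)) ∈ W := by
    intro a₁ b₁ ℓ
    have hle : Submodule.span ℂ
        {u : (A₁ × A₂) × (B₁ × B₂) → ℂ | ∃ v ∈ V, ∃ w ∈ W,
          u = fun p => v (p.1.1, p.2.1) * w (p.1.2, p.2.2)} ≤ W.comap
        (LinearMap.funLeft ℂ ℂ (fun ab : A₂ × B₂ => ((a₁, ab.1), (b₁, ab.2)))) := by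
      rw [Submodule.span_le]
      rintro _ ⟨v, hv, w, hw, rfl⟩
      simp only [Set.mem_preimage, SetLike.mem_coe, Submodule.mem_comap]
      have heq : (LinearMap.funLeft ℂ ℂ (fun ab : A₂ × B₂ => ((a₁, ab.1), (b₁, ab.2))))
          (fun p : (A₁ × A₂) × (B₁ × B₂) => v (p.1.1, p.2.1) * w (p.1.2, p.2.2))
          = v (a₁, b₁) • w := by
        funext ⟨c1, c2⟩
        simp only [LinearMap.funLeft_apply, Pi.smul_apply, smul_eq_mul]
        try ring
      rw [heq]
      exact W.smul_mem _ hw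
    exact hle (hΨ ℓ)
  -- first EB application
  set F : A₁ × B₁ → (A₂ × B₂ × Fin k → ℂ) :=
    fun ab w => Ψ ((ab.1, w.1), (ab.2, w.2.1), w.2.2) with hF
  set k₁ := Fintype.card (A₂ × B₂ × Fin k) with hk₁def
  have hk₁ : 1 ≤ k₁ := Fintype.card_pos
  set g : Fin k₁ ≃ A₂ × B₂ × Fin k := (Fintype.equivFin _).symm with hg
  obtain ⟨T, x, y, hxy⟩ := hV k₁ hk₁ (fun q : A₁ × B₁ × Fin k₁ => F (q.1, q.2.1) (g q.2.2))
    (fun ℓ₁ => hVmem (g ℓ₁).1 (g ℓ₁).2.1 (g ℓ₁).2.2)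
  set z : Fin T → A₂ × B₂ × Fin k → ℂ := fun t w => y t (g.symm w) with hz
  have KI : ∀ (a a' : A₁) (w w' : A₂ × B₂ × Fin k),
      ∑ b₁ : B₁, F (a, b₁) w * (starRingEnd ℂ) (F (a', b₁) w')
        = ∑ t, (x t a * (starRingEnd ℂ) (x t a')) * (z t w * (starRingEnd ℂ) (z t w')) := by
    intro a a' w w'
    have h := congr_fun (congr_fun hxy (a, g.symm w)) (a', g.symm w')
    simp only [TrB, Matrix.of_apply, Equiv.apply_symm_apply, Matrix.sum_apply] at h
    exact h
  -- projection onto the span of the F-slices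
  set S : Submodule ℂ (A₂ × B₂ × Fin k → ℂ) := Submodule.span ℂ (Set.range F) with hSdef
  obtain ⟨M, hM1, hM2⟩ := proj_exists S
  have hfix : ∀ ab : A₁ × B₁, M.mulVec (F ab) = F ab :=
    fun ab => hM1 _ (Submodule.subset_span ⟨ab, rfl⟩)
  set z' : Fin T → A₂ × B₂ × Fin k → ℂ := fun t => M.mulVec (z t) with hz'
  have swap : ∀ (α : A₂ × B₂ × Fin k → ℂ) (c : Fin T → ℂ)
      (f : Fin T → (A₂ × B₂ × Fin k) → ℂ) (d : Fin T → ℂ),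
      ∑ w₀, α w₀ * ∑ t, c t * (f t w₀ * d t) = ∑ t, c t * ((∑ w₀, α w₀ * f t w₀) * d t) := by
    intro α c f d
    calc ∑ w₀, α w₀ * ∑ t, c t * (f t w₀ * d t)
        = ∑ w₀, ∑ t, α w₀ * (c t * (f t w₀ * d t)) := by
          exact Finset.sum_congr rfl fun w₀ _ => Finset.mul_sum _ _ _
      _ = ∑ t, ∑ w₀, α w₀ * (c t * (f t w₀ * d t)) := Finset.sum_comm
      _ = ∑ t, c t * ((∑ w₀, α w₀ * f t w₀) * d t) := by
          refine Finset.sum_congr rfl fun t _ => ?_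
          rw [Finset.sum_mul, Finset.mul_sum]
          exact Finset.sum_congr rfl fun w₀ _ => by ring
  have KA : ∀ (a a' : A₁) (w w' : A₂ × B₂ × Fin k),
      ∑ b₁ : B₁, F (a, b₁) w * (starRingEnd ℂ) (F (a', b₁) w')
        = ∑ t, (x t a * (starRingEnd ℂ) (x t a')) * (z' t w * (starRingEnd ℂ) (z t w')) := by
    intro a a' w w'
    calc ∑ b₁ : B₁, F (a, b₁) w * (starRingEnd ℂ) (F (a', b₁) w')
        = ∑ b₁ : B₁, (M.mulVec (F (a, b₁))) w * (starRingEnd ℂ) (F (a', b₁) w') := by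
          exact Finset.sum_congr rfl fun b₁ _ => by rw [hfix (a, b₁)]
      _ = ∑ b₁ : B₁, ∑ w₀, M w w₀ * (F (a, b₁) w₀ * (starRingEnd ℂ) (F (a', b₁) w')) := by
          refine Finset.sum_congr rfl fun b₁ _ => ?_
          simp only [Matrix.mulVec, dotProduct]
          rw [Finset.sum_mul]
          exact Finset.sum_congr rfl fun w₀ _ => by ring
      _ = ∑ w₀, M w w₀ * ∑ b₁ : B₁, F (a, b₁) w₀ * (starRingEnd ℂ) (F (a', b₁) w') := by
          rw [Finset.sum_comm]
          exact Finset.sum_congr rfl fun w₀ _ => (Finset.mul_sum _ _ _).symm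
      _ = ∑ w₀, M w w₀ * ∑ t, (x t a * (starRingEnd ℂ) (x t a')) * (z t w₀ * (starRingEnd ℂ) (z t w')) := by
          exact Finset.sum_congr rfl fun w₀ _ => by rw [KI]
      _ = ∑ t, (x t a * (starRingEnd ℂ) (x t a')) * ((∑ w₀, M w w₀ * z t w₀) * (starRingEnd ℂ) (z t w')) := by
          have := swap (fun w₀ => M w w₀) (fun t => x t a * (starRingEnd ℂ) (x t a'))
            (fun t w₀ => z t w₀) (fun t => (starRingEnd ℂ) (z t w'))
          simpa [mul_assoc] using this
      _ = ∑ t, (x t a * (starRingEnd ℂ) (x t a')) * (z' t w * (starRingEnd ℂ) (z t w')) := rfl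
  have swap2 : ∀ (α : A₂ × B₂ × Fin k → ℂ) (c : Fin T → ℂ)
      (f : Fin T → (A₂ × B₂ × Fin k) → ℂ) (e : Fin T → ℂ),
      ∑ w₀, α w₀ * ∑ t, c t * (e t * f t w₀) = ∑ t, c t * (e t * ∑ w₀, α w₀ * f t w₀) := by
    intro α c f e
    calc ∑ w₀, α w₀ * ∑ t, c t * (e t * f t w₀)
        = ∑ w₀, ∑ t, α w₀ * (c t * (e t * f t w₀)) := by
          exact Finset.sum_congr rfl fun w₀ _ => Finset.mul_sum _ _ _
      _ = ∑ t, ∑ w₀, α w₀ * (c t * (e t * f t w₀)) := Finset.sum_comm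
      _ = ∑ t, c t * (e t * ∑ w₀, α w₀ * f t w₀) := by
          refine Finset.sum_congr rfl fun t _ => ?_
          rw [Finset.mul_sum, Finset.mul_sum]
          exact Finset.sum_congr rfl fun w₀ _ => by ring
  have KI' : ∀ (a a' : A₁) (w w' : A₂ × B₂ × Fin k),
      ∑ b₁ : B₁, F (a, b₁) w * (starRingEnd ℂ) (F (a', b₁) w')
        = ∑ t, (x t a * (starRingEnd ℂ) (x t a')) * (z' t w * (starRingEnd ℂ) (z' t w')) := by
    intro a a' w w'
    calc ∑ b₁ : B₁, F (a, b₁) w * (starRingEnd ℂ) (F (a', b₁) w')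
        = ∑ b₁ : B₁, F (a, b₁) w * (starRingEnd ℂ) ((M.mulVec (F (a', b₁))) w') := by
          exact Finset.sum_congr rfl fun b₁ _ => by rw [hfix (a', b₁)]
      _ = ∑ b₁ : B₁, ∑ w₀, (starRingEnd ℂ) (M w' w₀) * (F (a, b₁) w * (starRingEnd ℂ) (F (a', b₁) w₀)) := by
          refine Finset.sum_congr rfl fun b₁ _ => ?_
          simp only [Matrix.mulVec, dotProduct, map_sum, map_mul, Finset.mul_sum]
          exact Finset.sum_congr rfl fun w₀ _ => by ring
      _ = ∑ w₀, (starRingEnd ℂ) (M w' w₀) * ∑ b₁ : B₁, F (a, b₁) w * (starRingEnd ℂ) (F (a', b₁) w₀) := by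
          rw [Finset.sum_comm]
          exact Finset.sum_congr rfl fun w₀ _ => (Finset.mul_sum _ _ _).symm
      _ = ∑ w₀, (starRingEnd ℂ) (M w' w₀) * ∑ t, (x t a * (starRingEnd ℂ) (x t a')) * (z' t w * (starRingEnd ℂ) (z t w₀)) := by
          exact Finset.sum_congr rfl fun w₀ _ => by rw [KA]
      _ = ∑ t, (x t a * (starRingEnd ℂ) (x t a')) * (z' t w * ∑ w₀, (starRingEnd ℂ) (M w' w₀) * (starRingEnd ℂ) (z t w₀)) := by
          exact swap2 (fun w₀ => (starRingEnd ℂ) (M w' w₀)) _ (fun t w₀ => (starRingEnd ℂ) (z t w₀)) _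
      _ = ∑ t, (x t a * (starRingEnd ℂ) (x t a')) * (z' t w * (starRingEnd ℂ) (z' t w')) := by
          refine Finset.sum_congr rfl fun t _ => ?_
          congr 2
          simp only [hz', Matrix.mulVec, dotProduct, map_sum, map_mul]
  have hz'slice : ∀ t (ℓ : Fin k), (fun ab : A₂ × B₂ => z' t (ab.1, ab.2, ℓ)) ∈ W := by
    intro t ℓ
    have hle : S ≤ W.comap (LinearMap.funLeft ℂ ℂ (fun ab : A₂ × B₂ => (ab.1, ab.2, ℓ))) := by
      rw [hSdef, Submodule.span_le]
      rintro _ ⟨ab, rfl⟩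
      simp only [SetLike.mem_coe, Submodule.mem_comap]
      exact hWmem ab.1 ab.2 ℓ
    exact hle (hM2 (z t))
  choose T' u yy hzy using fun t => hW k hk (z' t) (hz'slice t)
  set N := Fintype.card ((t : Fin T) × Fin (T' t)) with hN
  set e : Fin N ≃ (t : Fin T) × Fin (T' t) := (Fintype.equivFin _).symm with he
  refine ⟨N, fun i p => x (e i).1 p.1 * u (e i).1 (e i).2 p.2,
    fun i => yy (e i).1 (e i).2, ?_⟩
  ext ⟨⟨a₁, a₂⟩, ℓ⟩ ⟨⟨a₁', a₂'⟩, ℓ'⟩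
  have L1 : TrB Ψ ((a₁, a₂), ℓ) ((a₁', a₂'), ℓ')
      = ∑ b₂ : B₂, ∑ b₁ : B₁,
          F (a₁, b₁) (a₂, b₂, ℓ) * (starRingEnd ℂ) (F (a₁', b₁) (a₂', b₂, ℓ')) := by
    simp only [TrB, Matrix.of_apply]
    rw [Fintype.sum_prod_type, Finset.sum_comm]
  calc TrB Ψ ((a₁, a₂), ℓ) ((a₁', a₂'), ℓ')
      = ∑ b₂ : B₂, ∑ t, (x t a₁ * (starRingEnd ℂ) (x t a₁'))
          * (z' t (a₂, b₂, ℓ) * (starRingEnd ℂ) (z' t (a₂', b₂, ℓ'))) := by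
        rw [L1]
        exact Finset.sum_congr rfl fun b₂ _ => KI' a₁ a₁' (a₂, b₂, ℓ) (a₂', b₂, ℓ')
    _ = ∑ t, (x t a₁ * (starRingEnd ℂ) (x t a₁'))
          * (∑ b₂ : B₂, z' t (a₂, b₂, ℓ) * (starRingEnd ℂ) (z' t (a₂', b₂, ℓ'))) := by
        rw [Finset.sum_comm]
        exact Finset.sum_congr rfl fun t _ => (Finset.mul_sum _ _ _).symm
    _ = ∑ t, (x t a₁ * (starRingEnd ℂ) (x t a₁'))
          * (TrB (z' t) (a₂, ℓ) (a₂', ℓ')) := rfl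
    _ = ∑ t, ∑ s, (x t a₁ * (starRingEnd ℂ) (x t a₁'))
          * ((u t s a₂ * (starRingEnd ℂ) (u t s a₂')) * (yy t s ℓ * (starRingEnd ℂ) (yy t s ℓ'))) := by
        refine Finset.sum_congr rfl fun t _ => ?_
        rw [hzy t, Matrix.sum_apply, Finset.mul_sum]
        rfl
    _ = ∑ σ : (t : Fin T) × Fin (T' t), (x σ.1 a₁ * (starRingEnd ℂ) (x σ.1 a₁'))
          * ((u σ.1 σ.2 a₂ * (starRingEnd ℂ) (u σ.1 σ.2 a₂')) * (yy σ.1 σ.2 ℓ * (starRingEnd ℂ) (yy σ.1 σ.2 ℓ'))) := by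
        rw [← Finset.univ_sigma_univ, Finset.sum_sigma]
    _ = ∑ i : Fin N, (x (e i).1 a₁ * (starRingEnd ℂ) (x (e i).1 a₁'))
          * ((u (e i).1 (e i).2 a₂ * (starRingEnd ℂ) (u (e i).1 (e i).2 a₂')) * (yy (e i).1 (e i).2 ℓ * (starRingEnd ℂ) (yy (e i).1 (e i).2 ℓ'))) :=
        (Equiv.sum_comp e _).symm
    _ = (∑ i : Fin N, Matrix.of (fun p q : (A₁ × A₂) × Fin k =>
          ((fun i p => x (e i).1 p.1 * u (e i).1 (e i).2 p.2) i p.1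
            * (starRingEnd ℂ) ((fun i p => x (e i).1 p.1 * u (e i).1 (e i).2 p.2) i q.1))
          * ((fun i => yy (e i).1 (e i).2) i p.2 * (starRingEnd ℂ) ((fun i => yy (e i).1 (e i).2) i q.2))))
          ((a₁, a₂), ℓ) ((a₁', a₂'), ℓ') := by
        rw [Matrix.sum_apply]
        refine Finset.sum_congr rfl fun i _ => ?_
        simp only [Matrix.of_apply, map_mul]
        ring
lemma isEBSpace_of_unique {A B : Type*} [Unique A] [Unique B] [Fintype B]
    (V : Submodule ℂ (A × B → ℂ)) : IsEBSpace V := by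
  intro k _ Ψ _
  refine ⟨1, fun _ _ => 1, fun _ ℓ => Ψ (default, default, ℓ), ?_⟩
  ext ⟨a, ℓ⟩ ⟨a', ℓ'⟩
  simp [TrB, Matrix.sum_apply, Unique.eq_default a, Unique.eq_default a']

lemma eb_transport {A B A' B' : Type*} [Fintype B] [Fintype B']
    (eA : A ≃ A') (eB : B ≃ B')
    (V : Submodule ℂ (A × B → ℂ)) (V' : Submodule ℂ (A' × B' → ℂ))
    (hV : IsEBSpace V)
    (hmem : ∀ u' ∈ V', (fun ab : A × B => u' (eA ab.1, eB ab.2)) ∈ V) :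
    IsEBSpace V' := by
  intro k hk Ψ' hΨ'
  obtain ⟨T, x, y, hxy⟩ := hV k hk (fun q => Ψ' (eA q.1, eB q.2.1, q.2.2))
    (fun ℓ => hmem _ (hΨ' ℓ))
  refine ⟨T, fun t a' => x t (eA.symm a'), y, ?_⟩
  ext ⟨a', ℓ⟩ ⟨c', ℓ'⟩
  have h1 : TrB Ψ' (a', ℓ) (c', ℓ') =
      TrB (fun q : A × B × Fin k => Ψ' (eA q.1, eB q.2.1, q.2.2)) (eA.symm a', ℓ) (eA.symm c', ℓ') := by
    simp only [TrB, Matrix.of_apply, Equiv.apply_symm_apply]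
    exact (Fintype.sum_equiv eB _ _ (fun b => by simp)).symm
  rw [h1, hxy]
  simp [Matrix.sum_apply]

theorem eb_tensor_many {r : ℕ} (m n : Fin r → ℕ)
    (V : ∀ j : Fin r, Submodule ℂ (Fin (m j) × Fin (n j) → ℂ))
    (hV : ∀ j, IsEBSpace (V j)) :
    IsEBSpace (Submodule.span ℂ
      {u : ((j : Fin r) → Fin (m j)) × ((j : Fin r) → Fin (n j)) → ℂ |
        ∃ v : (j : Fin r) → (Fin (m j) × Fin (n j) → ℂ),
          (∀ j, v j ∈ V j) ∧ u = fun p => ∏ j : Fin r, v j (p.1 j, p.2 j)}) := by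
  induction r with
  | zero => exact isEBSpace_of_unique _
  | succ r ih =>
    set Wt := Submodule.span ℂ
      {u : ((j : Fin r) → Fin (m j.succ)) × ((j : Fin r) → Fin (n j.succ)) → ℂ |
        ∃ v : (j : Fin r) → (Fin (m j.succ) × Fin (n j.succ) → ℂ),
          (∀ j, v j ∈ V j.succ) ∧ u = fun p => ∏ j : Fin r, v j (p.1 j, p.2 j)} with hWt
    have hWtEB : IsEBSpace Wt :=
      ih (fun j => m j.succ) (fun j => n j.succ) (fun j => V j.succ) (fun j => hV j.succ)
    have hbin := eb_binary (V 0) Wt (hV 0) hWtEB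
    refine eb_transport (Fin.consEquiv (fun j => Fin (m j)))
      (Fin.consEquiv (fun j => Fin (n j))) _ _ hbin ?_
    intro u' hu'
    have hle : Submodule.span ℂ
        {u : ((j : Fin (r+1)) → Fin (m j)) × ((j : Fin (r+1)) → Fin (n j)) → ℂ |
          ∃ v : (j : Fin (r+1)) → (Fin (m j) × Fin (n j) → ℂ),
            (∀ j, v j ∈ V j) ∧ u = fun p => ∏ j : Fin (r+1), v j (p.1 j, p.2 j)} ≤
        Submodule.comap
          (LinearMap.funLeft ℂ ℂ fun ab :
              (Fin (m 0) × ((j : Fin r) → Fin (m j.succ)))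
              × (Fin (n 0) × ((j : Fin r) → Fin (n j.succ))) =>
            (Fin.consEquiv (fun j => Fin (m j)) ab.1, Fin.consEquiv (fun j => Fin (n j)) ab.2))
          (Submodule.span ℂ
            {u | ∃ v ∈ V 0, ∃ w ∈ Wt, u = fun p => v (p.1.1, p.2.1) * w (p.1.2, p.2.2)}) := by
      rw [Submodule.span_le]
      rintro _ ⟨v, hv, rfl⟩
      simp only [SetLike.mem_coe, Submodule.mem_comap]
      apply Submodule.subset_span
      refine ⟨v 0, hv 0, fun q => ∏ j : Fin r, v j.succ (q.1 j, q.2 j),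
        Submodule.subset_span ⟨fun j => v j.succ, fun j => hv j.succ, rfl⟩, ?_⟩
      funext ab
      simp only [LinearMap.funLeft_apply, Fin.consEquiv_apply]
      rw [Fin.prod_univ_succ]
      simp [Fin.cons_zero, Fin.cons_succ]
    exact hle hu'
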